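/- Let g : [0,1) → ℝ be a C¹ nonnegative function with g(0) = 0 satisfying g'(t) ≤ a g(t)/(1-t²) + b/(1-t²)² + g(t)² for all t, where a ≤ 1.6c, b ≤ 4.5c, and 6.1c ≤ 1 with c > 0. Then g(t) ≤ t/(1-t²) for all t ∈ [0,1). -/

import Mathlib

theorem stmt_10 (c a b : ℝ) (hc : 0 < c) (hc' : 6.1 * c ≤ 1)
    (ha0 : 0 ≤ a) (hb0 : 0 ≤ b) (ha : a ≤ 1.6 * c) (hb : b ≤ 4.5 * c)
    (g g' : ℝ → ℝ)
    (hpos : ∀ t ∈ Set.Ico (0 : ℝ) 1, 0 ≤ g t)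
    (hd : ∀ t ∈ Set.Ico (0 : ℝ) 1, HasDerivAt g (g' t) t)
    (hcont : ContinuousOn g' (Set.Ico (0 : ℝ) 1))
    (h0 : g 0 = 0)
    (hineq : ∀ t ∈ Set.Ico (0 : ℝ) 1,
      g' t ≤ a * g t / (1 - t ^ 2) + b / (1 - t ^ 2) ^ 2 + g t ^ 2) :
    ∀ t ∈ Set.Ico (0 : ℝ) 1, g t ≤ t / (1 - t ^ 2) := by
  intro t ht
  obtain ⟨ht0, ht1⟩ := ht
  have hsub : Set.Icc (0:ℝ) t ⊆ Set.Ico (0:ℝ) 1 :=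
    fun x hx => ⟨hx.1, lt_of_le_of_lt hx.2 ht1⟩
  have hBd : ∀ x ∈ Set.Ico (0:ℝ) t,
      HasDerivWithinAt (fun x : ℝ => x / (1 - x ^ 2))
        ((1 + x ^ 2) / (1 - x ^ 2) ^ 2) (Set.Ici x) x := by
    intro x hx
    have hx1 : x ∈ Set.Ico (0:ℝ) 1 := hsub (Set.Ico_subset_Icc_self hx)
    have hne : (1 - x ^ 2) ≠ 0 := by nlinarith [hx1.1, hx1.2]
    have := (hasDerivAt_id x).div
      ((hasDerivAt_const x (1:ℝ)).sub ((hasDerivAt_pow 2 x))) hne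
    refine this.hasDerivWithinAt.congr_deriv ?_
    simp
    ring
  have hcg : ContinuousOn g (Set.Icc (0:ℝ) t) :=
    fun x hx => ((hd x (hsub hx)).continuousAt).continuousWithinAt
  have hdg : ∀ x ∈ Set.Ico (0:ℝ) t, HasDerivWithinAt g (g' x) (Set.Ici x) x :=
    fun x hx => (hd x (hsub (Set.Ico_subset_Icc_self hx))).hasDerivWithinAt
  have h0' : g 0 ≤ 0 / (1 - (0:ℝ) ^ 2) := by simp [h0]
  have hBc : ContinuousOn (fun x : ℝ => x / (1 - x ^ 2)) (Set.Icc (0:ℝ) t) := by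
    apply ContinuousOn.div continuousOn_id (by fun_prop)
    intro x hx
    have hx1 := hsub hx
    nlinarith [hx1.1, hx1.2]
  have hbound : ∀ x ∈ Set.Ico (0:ℝ) t, g x = x / (1 - x ^ 2) →
      g' x < (1 + x ^ 2) / (1 - x ^ 2) ^ 2 := by
    intro x hx heq
    have hx1 : x ∈ Set.Ico (0:ℝ) 1 := hsub (Set.Ico_subset_Icc_self hx)
    have hpos1 : 0 < 1 - x ^ 2 := by nlinarith [hx1.1, hx1.2]
    have h2 := hineq x hx1
    rw [heq] at h2
    have hlt : a * x + b < 1 := by nlinarith [hx1.1, hx1.2]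
    calc g' x ≤ a * (x / (1 - x ^ 2)) / (1 - x ^ 2) + b / (1 - x ^ 2) ^ 2
          + (x / (1 - x ^ 2)) ^ 2 := h2
      _ = (a * x + b + x ^ 2) / (1 - x ^ 2) ^ 2 := by field_simp
      _ < (1 + x ^ 2) / (1 - x ^ 2) ^ 2 := by
          rw [div_lt_div_iff₀ (by positivity) (by positivity)]
          exact mul_lt_mul_of_pos_right (by linarith) (by positivity)
  have key := image_le_of_deriv_right_lt_deriv_boundary' hcg hdg h0' hBc hBd hbound
  exact key ⟨ht0, le_refl t⟩
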